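/- Let r, R be positive integers with R ≥ r, A an r×r real symmetric positive definite matrix, and H an R×r real matrix of rank r (equivalently, Hᵀ H is invertible). Then the first-order regularization bias of the rescaled Tikhonov-regularization function is −A⁻¹ (Hᵀ H)⁻¹ A⁻¹: writing f̃(x) := Hᵀ (H A Hᵀ + x I_R)⁻¹ H, the quotient x⁻¹ (f̃(x) − A⁻¹) converges, as x → 0⁺, to −A⁻¹ (Hᵀ H)⁻¹ A⁻¹ in matrix norm. -/

import Mathlib

open Matrix

private lemma posSemidef_smul' {n : Type*} [Fintype n] {M : Matrix n n ℝ}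
    (hM : M.PosSemidef) {x : ℝ} (hx : 0 ≤ x) : (x • M).PosSemidef := by
  refine posSemidef_iff_dotProduct_mulVec.mpr ⟨?_, fun v => ?_⟩
  · unfold Matrix.IsHermitian
    rw [conjTranspose_smul, hM.1.eq]
    simp
  · rw [smul_mulVec, dotProduct_smul, smul_eq_mul]
    exact mul_nonneg hx (hM.dotProduct_mulVec_nonneg v)

private lemma posDef_smul' {n : Type*} [Fintype n] {M : Matrix n n ℝ}
    (hM : M.PosDef) {x : ℝ} (hx : 0 < x) : (x • M).PosDef := by
  refine posDef_iff_dotProduct_mulVec.mpr ⟨?_, fun v hv => ?_⟩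
  · unfold Matrix.IsHermitian
    rw [conjTranspose_smul, hM.1.eq]
    simp
  · rw [smul_mulVec, dotProduct_smul, smul_eq_mul]
    exact mul_pos hx (hM.dotProduct_mulVec_pos hv)

/-- First-order regularization bias of the rescaled Tikhonov-regularization function:
for `R ≥ r`, `A` an `r × r` real symmetric positive definite matrix, and `H` an `R × r`
real matrix of rank `r`, writing `f̃(x) = Hᵀ (H A Hᵀ + x I_R)⁻¹ H`, the quotient
`x⁻¹ (f̃(x) − A⁻¹)` converges to `−A⁻¹ (Hᵀ H)⁻¹ A⁻¹` as `x → 0⁺`. -/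
theorem rescaled_tikhonov_first_order_bias (r R : ℕ) (hr : 0 < r) (hrR : r ≤ R)
    (A : Matrix (Fin r) (Fin r) ℝ) (hA : A.PosDef)
    (H : Matrix (Fin R) (Fin r) ℝ) (hH : H.rank = r) :
    Filter.Tendsto
      (fun x : ℝ => x⁻¹ •
        (Hᵀ * (H * A * Hᵀ + x • (1 : Matrix (Fin R) (Fin R) ℝ))⁻¹ * H - A⁻¹))
      (nhdsWithin 0 (Set.Ioi 0)) (nhds (-(A⁻¹ * (Hᵀ * H)⁻¹ * A⁻¹))) := by
  set B : Matrix (Fin r) (Fin r) ℝ := (Hᵀ * H)⁻¹ with hBdef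
  -- `Hᵀ * H` is a unit
  have hrk : (Hᵀ * H).rank = r := by
    rw [Matrix.rank_transpose_mul_self, hH]
  have hHH : IsUnit (Hᵀ * H) := by
    rw [← Matrix.mulVec_surjective_iff_isUnit]
    have htop : LinearMap.range (Hᵀ * H).mulVecLin = ⊤ := by
      apply Submodule.eq_top_of_finrank_eq
      rw [Module.finrank_pi]
      rw [Fintype.card_fin]; exact hrk
    intro v
    have hv : v ∈ LinearMap.range (Hᵀ * H).mulVecLin := htop ▸ Submodule.mem_top
    obtain ⟨w, hw⟩ := hv
    exact ⟨w, hw⟩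
  have hHHdet : IsUnit (Hᵀ * H).det := (Matrix.isUnit_iff_isUnit_det _).mp hHH
  have hBHH : B * (Hᵀ * H) = 1 := Matrix.nonsing_inv_mul _ hHHdet
  -- `Hᵀ * H` is positive definite, hence so is `B`
  have hHHpd : (Hᵀ * H).PosDef := by
    refine posDef_iff_dotProduct_mulVec.mpr ⟨by simpa using Matrix.isHermitian_conjTranspose_mul_self H, fun v hv => ?_⟩
    have hinj : Function.Injective ((Hᵀ * H).mulVec) :=
      Matrix.mulVec_injective_iff_isUnit.mpr hHH
    have hHv : H *ᵥ v ≠ 0 := by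
      intro h0
      apply hv
      apply hinj
      rw [← Matrix.mulVec_mulVec, h0, Matrix.mulVec_zero, Matrix.mulVec_zero]
    have : star v ⬝ᵥ (Hᵀ * H) *ᵥ v = star (H *ᵥ v) ⬝ᵥ (H *ᵥ v) := by
      simp [← Matrix.mulVec_mulVec, Matrix.dotProduct_mulVec, Matrix.vecMul_transpose]
    rw [this]
    exact Matrix.dotProduct_star_self_pos_iff.mpr hHv
  have hBpd : B.PosDef := hHHpd.inv
  have hAdet : IsUnit A.det := (Matrix.isUnit_iff_isUnit_det _).mp hA.isUnit
  have hAinv : A * A⁻¹ = 1 := Matrix.mul_nonsing_inv _ hAdet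
  -- pointwise identity on `Ioi 0`
  have key : ∀ x ∈ Set.Ioi (0 : ℝ),
      x⁻¹ • (Hᵀ * (H * A * Hᵀ + x • (1 : Matrix (Fin R) (Fin R) ℝ))⁻¹ * H - A⁻¹)
        = -((A + x • B)⁻¹ * B * A⁻¹) := by
    intro x hx
    have hx0 : (0 : ℝ) < x := hx
    set M : Matrix (Fin R) (Fin R) ℝ := H * A * Hᵀ + x • 1 with hMdef
    have hM1 : (H * A * Hᵀ).PosSemidef := by
      have := hA.posSemidef.mul_mul_conjTranspose_same H
      rwa [conjTranspose_eq_transpose_of_trivial] at this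
    have hM2 : ((x : ℝ) • (1 : Matrix (Fin R) (Fin R) ℝ)).PosDef :=
      posDef_smul' Matrix.PosDef.one hx0
    have hMpd : M.PosDef := Matrix.PosDef.posSemidef_add hM1 hM2
    have hMdet : IsUnit M.det := (Matrix.isUnit_iff_isUnit_det _).mp hMpd.isUnit
    have hMM : M * M⁻¹ = 1 := Matrix.mul_nonsing_inv _ hMdet
    have hBHM : B * Hᵀ * M = A * Hᵀ + x • (B * Hᵀ) := by
      rw [hMdef, Matrix.mul_add, Matrix.mul_smul, Matrix.mul_one, ← Matrix.mul_assoc, ← Matrix.mul_assoc,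
        Matrix.mul_assoc B Hᵀ H, hBHH, Matrix.one_mul]
    have hAxBpd : (A + x • B).PosDef := hA.add_posSemidef (posSemidef_smul' hBpd.posSemidef hx0.le)
    have hAxBdet : IsUnit (A + x • B).det := (Matrix.isUnit_iff_isUnit_det _).mp hAxBpd.isUnit
    have hginv : (A + x • B)⁻¹ * (A + x • B) = 1 := Matrix.nonsing_inv_mul _ hAxBdet
    have e2 : (A + x • B) * Hᵀ = B * Hᵀ * M := by
      rw [Matrix.add_mul, Matrix.smul_mul]
      exact hBHM.symm
    have hfx : Hᵀ * M⁻¹ * H = (A + x • B)⁻¹ := by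
      refine (Matrix.inv_eq_right_inv ?_).symm
      calc (A + x • B) * (Hᵀ * M⁻¹ * H)
          = (A + x • B) * Hᵀ * M⁻¹ * H := by
            simp only [Matrix.mul_assoc]
        _ = B * Hᵀ * M * M⁻¹ * H := by rw [e2]
        _ = B * Hᵀ * H := by
            rw [Matrix.mul_assoc (B * Hᵀ) M M⁻¹, hMM, Matrix.mul_one]
        _ = 1 := by rw [Matrix.mul_assoc, hBHH]
    have hdiff : (A + x • B)⁻¹ - A⁻¹ = -(x • ((A + x • B)⁻¹ * B * A⁻¹)) := by
      have h5 : (A + x • B)⁻¹ * (A - (A + x • B)) * A⁻¹ = (A + x • B)⁻¹ - A⁻¹ := by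
        rw [mul_sub, sub_mul, Matrix.mul_assoc, hAinv, Matrix.mul_one, hginv, Matrix.one_mul]
      rw [← h5, sub_add_cancel_left, mul_neg, neg_mul, Matrix.mul_smul, Matrix.smul_mul]
    rw [hfx, hdiff, smul_neg, smul_smul, inv_mul_cancel₀ hx0.ne', one_smul]
  -- continuity of the limit function
  have hcont : Filter.Tendsto (fun x : ℝ => -((A + x • B)⁻¹ * B * A⁻¹))
      (nhdsWithin 0 (Set.Ioi 0)) (nhds (-(A⁻¹ * B * A⁻¹))) := by
    have h1 : ContinuousAt (fun x : ℝ => A + x • B) 0 :=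
      (continuous_const.add (continuous_id.smul continuous_const)).continuousAt
    have h2 : ContinuousAt (Inv.inv : Matrix (Fin r) (Fin r) ℝ → Matrix (Fin r) (Fin r) ℝ)
        (A + (0 : ℝ) • B) := by
      rw [zero_smul, add_zero]
      exact continuousAt_matrix_inv A (by simpa using NormedRing.inverse_continuousAt hAdet.unit)
    have h2' : ContinuousAt (fun x : ℝ => (A + x • B)⁻¹) 0 := ContinuousAt.comp (g := (Inv.inv : Matrix (Fin r) (Fin r) ℝ → Matrix (Fin r) (Fin r) ℝ)) (f := fun x : ℝ => A + x • B) h2 h1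
    have h3 : ContinuousAt (fun x : ℝ => -((A + x • B)⁻¹ * B * A⁻¹)) 0 :=
      ((h2'.mul continuousAt_const).mul continuousAt_const).neg
    have h4 : Filter.Tendsto (fun x : ℝ => -((A + x • B)⁻¹ * B * A⁻¹))
        (nhdsWithin 0 (Set.Ioi 0)) (nhds (-((A + (0 : ℝ) • B)⁻¹ * B * A⁻¹))) :=
      h3.continuousWithinAt
    simpa using h4
  exact hcont.congr'
    (Filter.eventuallyEq_of_mem self_mem_nhdsWithin fun x hx => (key x hx).symm)
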